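/- Let E be a finite-dimensional real normed vector space, U ⊆ E open, J an almost complex structure on U, and Γ : U → (E →L[ℝ] E →L[ℝ] E) the Christoffel symbols of an arbitrary linear connection on U. Define Γ̂(x)(u)(v) := (1/2)·(Γ(x)(u)(v) - J(x)((D_u J)(x)(v)) - J(x)(Γ(x)(u)(J(x)v))), which are the Christoffel symbols of the connection ∇̂ = (1/2)(∇ - J∇J), i.e. ∇̂_X Y = (1/2)(∇_X Y - J∇_X(JY)). Then Γ̂ is an almost complex connection for J: (D_u J)(x)(v) + Γ̂(x)(u)(J(x)v) - J(x)(Γ̂(x)(u)(v)) = 0 for all x ∈ U and u, v ∈ E. -/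

import Mathlib

/-- Appendix A of the paper: any linear connection can be made almost complex by the
averaging `∇ ↦ ∇̂ = (1/2)(∇ - J∇J)`; in Christoffel symbols,
`Γ̂(x)(u)(v) = (1/2)(Γ(x)(u)(v) - J(x)((D_u J)(x)(v)) - J(x)(Γ(x)(u)(J(x)v)))`
satisfies the almost complex connection condition `∇̂J = 0`. -/
theorem averaged_connection_is_almost_complex
    {E : Type*} [NormedAddCommGroup E] [NormedSpace ℝ E] [FiniteDimensional ℝ E]
    (U : Set E) (hU : IsOpen U)
    (J : E → E →L[ℝ] E)
    (hJs : ContDiffOn ℝ (⊤ : ℕ∞) J U)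
    (hJ2 : ∀ x ∈ U, (J x).comp (J x) = -ContinuousLinearMap.id ℝ E)
    (Γ : E → E →L[ℝ] E →L[ℝ] E)
    (hΓs : ContDiffOn ℝ (⊤ : ℕ∞) Γ U) :
    ∀ x ∈ U, ∀ u v : E,
      fderiv ℝ J x u v
        + (1/2 : ℝ) • (Γ x u (J x v) - J x (fderiv ℝ J x u (J x v))
            - J x (Γ x u (J x (J x v))))
        - J x ((1/2 : ℝ) • (Γ x u v - J x (fderiv ℝ J x u v) - J x (Γ x u (J x v)))) = 0 := by
  intro x hx u v
  have hmem : U ∈ nhds x := hU.mem_nhds hx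
  have hd : DifferentiableAt ℝ J x :=
    ((hJs.contDiffAt hmem).differentiableAt (by simp))
  -- the key identity: differentiating J∘J = -id
  have key : ∀ w : E, fderiv ℝ J x u (J x w) + J x (fderiv ℝ J x u w) = 0 := by
    intro w
    have hdw : HasFDerivAt (fun y => J y w) ((fderiv ℝ J x).flip w) x := by
      exact (ContinuousLinearMap.apply ℝ E w).hasFDerivAt.comp x hd.hasFDerivAt
    have hf : HasFDerivAt (fun y => J y (J y w))
        ((J x).comp ((fderiv ℝ J x).flip w) + (fderiv ℝ J x).flip (J x w)) x :=
      hd.hasFDerivAt.clm_apply hdw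
    have heq : (fun y => J y (J y w)) =ᶠ[nhds x] fun _ => -w := by
      filter_upwards [hmem] with y hy
      have := congrArg (fun (T : E →L[ℝ] E) => T w) (hJ2 y hy)
      simpa using this
    have hf0 : HasFDerivAt (fun y => J y (J y w)) (0 : E →L[ℝ] E) x := by
      refine HasFDerivAt.congr_of_eventuallyEq ?_ heq
      exact hasFDerivAt_const _ _
    have hD : (J x).comp ((fderiv ℝ J x).flip w) + (fderiv ℝ J x).flip (J x w)
        = (0 : E →L[ℝ] E) := hf.unique hf0
    have := congrArg (fun (T : E →L[ℝ] E) => T u) hD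
    simpa [add_comm] using this
  have hJJ : ∀ w : E, J x (J x w) = -w := by
    intro w
    have := congrArg (fun (T : E →L[ℝ] E) => T w) (hJ2 x hx)
    simpa using this
  have h1 : fderiv ℝ J x u (J x v) = - J x (fderiv ℝ J x u v) :=
    eq_neg_of_add_eq_zero_left (key v)
  rw [h1, hJJ v]
  simp only [map_neg, map_smul, map_sub, hJJ]
  module
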